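/- Let M ≥ 3, π ∈ B_M, and let yz (with 0 < y < z) be a side boundary edge of L_π with respect to B_M. Then: π contains at most one copy of e; y < z−1; L_π has an (M−1)-fan at y while L_{π'} has an M-fan at y; and z = y + M if π(y−2) ≠ e, whereas z = y + M − 1 if π(y−2) = e. -/

import Mathlib

noncomputable section

namespace TriangleRemoval

/-- The alphabet `{e, 0, 1}` of triangular-ladder words. -/
inductive Sym : Type
  | e : Sym
  | zero : Sym
  | one : Sym
deriving DecidableEq

/-- `nth π j` is the `j`-th symbol of `π` (1-based), if it exists. -/
def nth (π : List Sym) (j : ℕ) : Option Sym :=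
  if j = 0 then none else π[j - 1]?

/-- One construction step of a triangular ladder. The state is
`(k, o, E)`: the last vertex `k`, the backward neighbor `o` of `k` other than `k - 1`
(junk if the last symbol was `e`), and the current edge set `E`. -/
def ladderStep : ℕ × ℕ × Set (Sym2 ℕ) → Sym → ℕ × ℕ × Set (Sym2 ℕ)
  | (k, _, E), Sym.one => (k + 1, k - 1, insert s(k - 1, k + 1) (insert s(k, k + 1) E))
  | (k, o, E), Sym.zero => (k + 1, o, insert s(o, k + 1) (insert s(k, k + 1) E))
  | (k, _, E), Sym.e => (k + 1, 0, insert s(k, k + 1) E)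

/-- The initial state of the construction, according to the first symbol:
`L_1` has edges `{02, 12}`, `L_e` has the single edge `12`. -/
def ladderInit : Sym → ℕ × ℕ × Set (Sym2 ℕ)
  | Sym.one => (2, 0, {s(0, 2), s(1, 2)})
  | _ => (2, 0, {s(1, 2)})

/-- The data of the triangular ladder built from the word `π`. -/
def ladderData : List Sym → ℕ × ℕ × Set (Sym2 ℕ)
  | [] => (1, 0, ∅)
  | a :: rest => rest.foldl ladderStep (ladderInit a)

/-- The triangular ladder `L_π`, a graph on `{0, 1, …, |π|+1} ⊆ ℕ`. -/
def ladder (π : List Sym) : SimpleGraph ℕ :=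
  SimpleGraph.fromEdgeSet (ladderData π).2.2

/-- `L_π` has an `f`-fan at the vertex `a > 0`. -/
def hasFanAt (π : List Sym) (f a : ℕ) : Prop :=
  0 < a ∧
    ((nth π (a - 2) ≠ some Sym.e ∧
        ∀ b ∈ Finset.Icc (a + 1) (a + f + 1), (ladder π).Adj a b) ∨
     (nth π (a - 2) = some Sym.e ∧ (ladder π).Adj a (a - 1) ∧
        ∀ b ∈ Finset.Icc (a + 1) (a + f), (ladder π).Adj a b))

/-- `L_π` contains an `f`-fan. -/
def hasFan (π : List Sym) (f : ℕ) : Prop := ∃ a, hasFanAt π f a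

/-- Membership in `Π`: no `0` in positions 1 or 2, at most two occurrences of `e`, and
no substrings `e0`, `e10`, `e1e`. -/
def memPi (π : List Sym) : Prop :=
  nth π 1 ≠ some Sym.zero ∧ nth π 2 ≠ some Sym.zero ∧ π.count Sym.e ≤ 2 ∧
    ¬ [Sym.e, Sym.zero] <:+: π ∧ ¬ [Sym.e, Sym.one, Sym.zero] <:+: π ∧
    ¬ [Sym.e, Sym.one, Sym.e] <:+: π

/-- Membership in `B_M`: `π ∈ Π` is nonempty, contains no `M`-fan, and satisfies the
length restrictions according to the number of occurrences of `e`. -/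
def memB (M : ℕ) (π : List Sym) : Prop :=
  memPi π ∧ π ≠ [] ∧ ¬ hasFan π M ∧
    ((π.count Sym.e = 0 ∧ π.length ≤ 3 * M - 1) ∨
     (π.count Sym.e = 1 ∧ π.length ≤ 2 * M ∧ nth π (2 * M) ≠ some Sym.e) ∨
     (π.count Sym.e = 2 ∧ π.length ≤ M + 1 ∧ nth π (M + 1) ≠ some Sym.e))

/-- `π' = π_{z-1} ∘ 0` if `y < z-1` and `π' = π_{z-1} ∘ 1` if `y = z-1`. -/
def boundaryWord (π : List Sym) (y z : ℕ) : List Sym :=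
  π.take (z - 1) ++ [if y < z - 1 then Sym.zero else Sym.one]

/-- `yz` is a boundary edge of `L_π` with respect to `B_M`. -/
def IsBoundaryEdge (M : ℕ) (π : List Sym) (y z : ℕ) : Prop :=
  0 < y ∧ y < z ∧ (ladder π).Adj y z ∧ nth π y ≠ some Sym.e ∧
    ¬ memB M (boundaryWord π y z)

/-- `yz` is an outer boundary edge of `L_π` with respect to `B_M`. -/
def IsOuterBoundaryEdge (M : ℕ) (π : List Sym) (y z : ℕ) : Prop :=
  IsBoundaryEdge M π y z ∧ z = π.length + 1 ∧
    ((π.count Sym.e = 0 ∧ π.length = 3 * M - 1) ∨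
     (π.count Sym.e = 1 ∧ π.length = 2 * M) ∨
     (π.count Sym.e = 2 ∧ π.length = M + 1))

/-- `yz` is a side boundary edge of `L_π` with respect to `B_M`. -/
def IsSideBoundaryEdge (M : ℕ) (π : List Sym) (y z : ℕ) : Prop :=
  IsBoundaryEdge M π y z ∧ ¬ IsOuterBoundaryEdge M π y z


/-! ### Auxiliary development -/

def edgesOf (π : List Sym) : Set (Sym2 ℕ) := (ladderData π).2.2

def oOf (π : List Sym) : ℕ := (ladderData π).2.1

lemma ladderData_concat (π : List Sym) (hπ : π ≠ []) (s : Sym) :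
    ladderData (π ++ [s]) = ladderStep (ladderData π) s := by
  cases π with
  | nil => exact absurd rfl hπ
  | cons a rest =>
      show ladderData (a :: (rest ++ [s])) = _
      simp only [ladderData, List.foldl_append, List.foldl_cons, List.foldl_nil]

lemma fst_ladderData (π : List Sym) (hπ : π ≠ []) : (ladderData π).1 = π.length + 1 := by
  induction π using List.reverseRecOn with
  | nil => exact absurd rfl hπ
  | append_singleton π s ih =>
      rcases eq_or_ne π [] with rfl | hne
      · cases s <;> rfl
      · rw [ladderData_concat π hne s]
        have := ih hne
        cases s <;> simp [ladderStep, this] <;> omega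

lemma edgesOf_concat_subset (π : List Sym) (s : Sym) :
    edgesOf π ⊆ edgesOf (π ++ [s]) := by
  rcases eq_or_ne π [] with rfl | hne
  · intro x hx; simp [edgesOf, ladderData] at hx
  · rw [edgesOf, edgesOf, ladderData_concat π hne s]
    obtain ⟨k, o, E⟩ := ladderData π
    cases s <;> intro x hx <;> simp [ladderStep] <;> tauto

lemma edgesOf_append_subset (π ρ : List Sym) : edgesOf π ⊆ edgesOf (π ++ ρ) := by
  induction ρ using List.reverseRecOn with
  | nil => simp
  | append_singleton ρ s ih =>
      rw [← List.append_assoc]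
      exact ih.trans (edgesOf_concat_subset (π ++ ρ) s)

lemma edgesOf_take_subset (π : List Sym) (n : ℕ) : edgesOf (π.take n) ⊆ edgesOf π := by
  have := edgesOf_append_subset (π.take n) (π.drop n)
  rwa [List.take_append_drop] at this

lemma oOf_lt (π : List Sym) (hπ : π ≠ []) : oOf π + 1 ≤ π.length := by
  induction π using List.reverseRecOn with
  | nil => exact absurd rfl hπ
  | append_singleton π s ih =>
      rcases eq_or_ne π [] with rfl | hne
      · cases s <;> simp [oOf, ladderData, ladderInit]
      · have hk := fst_ladderData π hne
        have ho := ih hne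
        rw [oOf, ladderData_concat π hne s]
        rcases hd : ladderData π with ⟨k, o, E⟩
        rw [hd] at hk
        simp only at hk
        simp only [oOf, hd] at ho
        simp only [List.length_append, List.length_singleton]
        cases s <;> simp only [ladderStep] <;> omega

lemma mem_edgesOf_bound {π : List Sym} {u v : ℕ} (h : s(u, v) ∈ edgesOf π) :
    u ≤ π.length + 1 ∧ v ≤ π.length + 1 := by
  induction π using List.reverseRecOn with
  | nil => simp [edgesOf, ladderData] at h
  | append_singleton π s ih =>
      rcases eq_or_ne π [] with rfl | hne
      · cases s <;>
          · simp only [edgesOf, ladderData, List.nil_append, ladderInit, List.foldl_nil,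
              Set.mem_insert_iff, Set.mem_singleton_iff] at h
            simp only [List.length_append, List.length_nil, List.length_singleton]
            first
            | (rcases h with h | h <;> rw [Sym2.eq_iff] at h <;> omega)
            | (rw [Sym2.eq_iff] at h; omega)
      · have hk := fst_ladderData π hne
        have ho := oOf_lt π hne
        rw [edgesOf, ladderData_concat π hne s] at h
        rcases hd : ladderData π with ⟨k, o, E⟩
        rw [hd] at h hk
        simp only at hk
        simp only [oOf, hd] at ho
        have IH : s(u, v) ∈ E → u ≤ π.length + 1 ∧ v ≤ π.length + 1 := fun hm =>
          ih (by rw [edgesOf, hd]; exact hm)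
        simp only [List.length_append, List.length_singleton]
        cases s <;> simp only [ladderStep, Set.mem_insert_iff] at h <;>
          (rcases h with h | h
           · rw [Sym2.eq_iff] at h; omega
           · first
               | (have := IH h; omega)
               | (rcases h with h | h
                  · rw [Sym2.eq_iff] at h; omega
                  · have := IH h; omega))


lemma nth_concat_lt {π : List Sym} {s : Sym} {j : ℕ} (hj : j ≤ π.length) :
    nth (π ++ [s]) j = nth π j := by
  unfold nth
  rcases eq_or_ne j 0 with rfl | h
  · simp
  · rw [if_neg h, if_neg h, List.getElem?_append_left (by omega)]

lemma nth_concat_self (π : List Sym) (s : Sym) : nth (π ++ [s]) (π.length + 1) = some s := by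
  unfold nth
  rw [if_neg (by omega)]
  simpa using List.getElem?_concat_length π s

lemma nth_take {π : List Sym} {n j : ℕ} (hj : j ≤ n) : nth (π.take n) j = nth π j := by
  unfold nth
  rcases eq_or_ne j 0 with rfl | h
  · simp
  · rw [if_neg h, if_neg h, List.getElem?_take, if_pos (by omega)]

lemma nth_some {π : List Sym} {j : ℕ} {a : Sym} (h : nth π j = some a) :
    1 ≤ j ∧ j ≤ π.length ∧ π[j - 1]? = some a := by
  unfold nth at h
  rcases eq_or_ne j 0 with rfl | hj
  · simp at h
  · rw [if_neg hj] at h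
    have := (List.getElem?_eq_some_iff.mp h).1
    exact ⟨by omega, by omega, h⟩

lemma nth_none_of_gt {π : List Sym} {j : ℕ} (h : π.length < j) : nth π j = none := by
  unfold nth
  rw [if_neg (by omega)]
  exact List.getElem?_eq_none (by omega)

lemma oOf_concat_zero (π : List Sym) (hπ : π ≠ []) : oOf (π ++ [Sym.zero]) = oOf π := by
  rw [oOf, ladderData_concat π hπ Sym.zero, oOf]
  rcases ladderData π with ⟨k, o, E⟩
  rfl

lemma oOf_concat_one (π : List Sym) : oOf (π ++ [Sym.one]) = π.length := by
  rcases eq_or_ne π [] with rfl | hne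
  · rfl
  · rw [oOf, ladderData_concat π hne Sym.one]
    have hk := fst_ladderData π hne
    rcases hd : ladderData π with ⟨k, o, E⟩
    rw [hd] at hk
    simp only at hk
    simp only [ladderStep]
    omega

lemma oOf_take_of_one {π : List Sym} {j : ℕ} (h : nth π j = some Sym.one) :
    oOf (π.take j) = j - 1 := by
  obtain ⟨h1, h2, h3⟩ := nth_some h
  have ht : π.take j = π.take (j - 1) ++ [Sym.one] := by
    have : j = (j - 1) + 1 := by omega
    rw [this, List.take_succ, h3]
    rfl
  rw [ht, oOf_concat_one, List.length_take]
  omega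

lemma edge_inv {π : List Sym} {y z : ℕ} (h : s(y, z) ∈ edgesOf π) (hy : 1 ≤ y)
    (hz : y + 1 < z) :
    (nth π (z - 1) = some Sym.one ∧ y = z - 2) ∨
    (nth π (z - 1) = some Sym.zero ∧ y = oOf (π.take (z - 1))) := by
  induction π using List.reverseRecOn with
  | nil => simp [edgesOf, ladderData] at h
  | append_singleton π s ih =>
      rcases eq_or_ne π [] with rfl | hne
      · exfalso
        cases s <;>
          · simp only [edgesOf, ladderData, List.nil_append, ladderInit, List.foldl_nil,
              Set.mem_insert_iff, Set.mem_singleton_iff] at h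
            first
            | (rcases h with h | h <;> rw [Sym2.eq_iff] at h <;> omega)
            | (rw [Sym2.eq_iff] at h; omega)
      · have hk := fst_ladderData π hne
        have hob := oOf_lt π hne
        rw [edgesOf, ladderData_concat π hne s] at h
        rcases hd : ladderData π with ⟨k, o, E⟩
        rw [hd] at h hk
        simp only at hk
        simp only [oOf, hd] at hob
        have IH : s(y, z) ∈ E →
            (nth π (z - 1) = some Sym.one ∧ y = z - 2) ∨
            (nth π (z - 1) = some Sym.zero ∧ y = oOf (π.take (z - 1))) := fun hm =>
          ih (by rw [edgesOf, hd]; exact hm)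
        have transport : (nth π (z - 1) = some Sym.one ∧ y = z - 2) ∨
            (nth π (z - 1) = some Sym.zero ∧ y = oOf (π.take (z - 1))) →
            (nth (π ++ [s]) (z - 1) = some Sym.one ∧ y = z - 2) ∨
            (nth (π ++ [s]) (z - 1) = some Sym.zero ∧ y = oOf ((π ++ [s]).take (z - 1))) := by
          rintro (⟨ha, hb⟩ | ⟨ha, hb⟩)
          · exact Or.inl ⟨(nth_concat_lt (nth_some ha).2.1).trans ha, hb⟩
          · refine Or.inr ⟨(nth_concat_lt (nth_some ha).2.1).trans ha, ?_⟩
            rw [List.take_append_of_le_length (nth_some ha).2.1]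
            exact hb
        cases s with
        | e =>
            simp only [ladderStep, Set.mem_insert_iff] at h
            rcases h with h | h
            · rw [Sym2.eq_iff] at h; omega
            · exact transport (IH h)
        | one =>
            simp only [ladderStep, Set.mem_insert_iff] at h
            rcases h with h | h | h
            · rw [Sym2.eq_iff] at h
              left
              constructor
              · have hz1 : z - 1 = π.length + 1 := by omega
                rw [hz1, nth_concat_self]
              · omega
            · rw [Sym2.eq_iff] at h; omega
            · exact transport (IH h)
        | zero =>
            simp only [ladderStep, Set.mem_insert_iff] at h
            rcases h with h | h | h
            · rw [Sym2.eq_iff] at h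
              right
              have hyo : y = o ∧ z = k + 1 := by omega
              constructor
              · have hz1 : z - 1 = π.length + 1 := by omega
                rw [hz1, nth_concat_self]
              · have hz1 : z - 1 = (π ++ [Sym.zero]).length := by simp; omega
                rw [hz1, List.take_of_length_le (le_refl _), oOf_concat_zero π hne]
                rw [oOf, hd]
                exact hyo.1
            · rw [Sym2.eq_iff] at h; omega
            · exact transport (IH h)

lemma edge_inv_ne {π : List Sym} {y z : ℕ} (h : s(y, z) ∈ edgesOf π) (hy : 1 ≤ y)
    (hz : y + 1 < z) : nth π (z - 1) ≠ some Sym.e ∧ z ≤ π.length + 1 := by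
  rcases edge_inv h hy hz with ⟨ha, _⟩ | ⟨ha, _⟩ <;>
    exact ⟨by rw [ha]; simp, by have := (nth_some ha).2.1; omega⟩


lemma adj_iff (π : List Sym) (u v : ℕ) :
    (ladder π).Adj u v ↔ s(u, v) ∈ edgesOf π ∧ u ≠ v :=
  SimpleGraph.fromEdgeSet_adj _

lemma edges_boundaryWord {π : List Sym} {y z : ℕ} (h : s(y, z) ∈ edgesOf π) (hy : 1 ≤ y)
    (hyz : y < z) :
    edgesOf (boundaryWord π y z) =
      insert s(y, z + 1) (insert s(z, z + 1) (edgesOf (π.take (z - 1)))) := by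
  have hzb : z ≤ π.length + 1 := (mem_edgesOf_bound h).2
  have hlen : (π.take (z - 1)).length = z - 1 := by rw [List.length_take]; omega
  have hτne : π.take (z - 1) ≠ [] := by
    intro h0; rw [h0] at hlen; simp at hlen; omega
  have hk : (ladderData (π.take (z - 1))).1 = z := by
    rw [fst_ladderData _ hτne, hlen]; omega
  show edgesOf (π.take (z - 1) ++ [_]) = _
  rw [edgesOf, ladderData_concat _ hτne _]
  rcases hd : ladderData (π.take (z - 1)) with ⟨k, o, E⟩
  rw [hd] at hk
  simp only at hk
  have hE : edgesOf (π.take (z - 1)) = E := by rw [edgesOf, hd]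
  rcases Nat.lt_or_ge y (z - 1) with hlt | hge
  · have hoy : o = y := by
      rcases edge_inv h hy (by omega) with ⟨ha, hb⟩ | ⟨ha, hb⟩
      · have h2 := oOf_take_of_one ha
        rw [oOf, hd] at h2
        simp only at h2
        omega
      · rw [oOf, hd] at hb
        simp only at hb
        omega
    rw [if_pos hlt]
    simp only [ladderStep, hk, hoy, hE]
  · have hy1 : y = z - 1 := by omega
    rw [if_neg (by omega)]
    simp only [ladderStep, hk, hE]
    have : z - 1 = y := hy1.symm
    rw [this]

lemma hasFanAt_take {π : List Sym} {n f a : ℕ} (h : hasFanAt (π.take n) f a) :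
    hasFanAt π f a := by
  obtain ⟨ha, hcase⟩ := h
  have hadj : ∀ b, (ladder (π.take n)).Adj a b → (ladder π).Adj a b := by
    intro b hb
    rw [adj_iff] at hb ⊢
    exact ⟨edgesOf_take_subset π n hb.1, hb.2⟩
  refine ⟨ha, ?_⟩
  rcases hcase with ⟨hne, hb⟩ | ⟨heq, hm, hb⟩
  · left
    have h1 := hb (a + 1) (Finset.mem_Icc.mpr (by omega))
    have hmem : s(a, a + 1) ∈ edgesOf (π.take n) := ((adj_iff _ _ _).mp h1).1
    have hbd := (mem_edgesOf_bound hmem).2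
    rw [List.length_take] at hbd
    refine ⟨?_, fun b hbmem => hadj b (hb b hbmem)⟩
    rwa [nth_take (show a - 2 ≤ n by omega)] at hne
  · right
    have hbd := (nth_some heq).2.1
    rw [List.length_take] at hbd
    rw [nth_take (show a - 2 ≤ n by omega)] at heq
    exact ⟨heq, hadj _ hm, fun b hbmem => hadj b (hb b hbmem)⟩

lemma infix_concat {l m : List Sym} {x : Sym} (h : l <:+: m ++ [x]) :
    l <:+: m ∨ l <:+ m ++ [x] := by
  obtain ⟨p, t, hpt⟩ := h
  rcases List.eq_nil_or_concat t with rfl | ⟨t₀, c, rfl⟩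
  · right; exact ⟨p, by simpa using hpt⟩
  · left
    have hpt' : (p ++ l ++ t₀) ++ [c] = m ++ [x] := by
      simpa [List.concat_eq_append, List.append_assoc] using hpt
    obtain ⟨h1, _⟩ := List.append_inj' hpt' (by simp)
    exact ⟨p, t₀, h1⟩

lemma suffix_pair {a b x : Sym} {m : List Sym} (h : [a, b] <:+ m ++ [x]) :
    b = x ∧ nth m m.length = some a := by
  obtain ⟨p, hp⟩ := h
  have h2 : (p ++ [a]) ++ [b] = m ++ [x] := by
    rw [List.append_assoc]; exact hp
  obtain ⟨h1, h3⟩ := List.append_inj' h2 (by simp)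
  refine ⟨by simpa using h3, ?_⟩
  rw [← h1]
  have : (p ++ [a]).length = p.length + 1 := by simp
  rw [this, nth_concat_self]

lemma suffix_triple {a b c x : Sym} {m : List Sym} (h : [a, b, c] <:+ m ++ [x]) :
    c = x ∧ nth m (m.length - 1) = some a ∧ nth m m.length = some b := by
  obtain ⟨p, hp⟩ := h
  have h2 : ((p ++ [a]) ++ [b]) ++ [c] = m ++ [x] := by
    rw [List.append_assoc, List.append_assoc]; exact hp
  obtain ⟨h1, h3⟩ := List.append_inj' h2 (by simp)
  refine ⟨by simpa using h3, ?_, ?_⟩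
  · rw [← h1]
    have hl : ((p ++ [a]) ++ [b]).length - 1 = p.length + 1 := by simp
    rw [hl, nth_concat_lt (by simp), nth_concat_self]
  · rw [← h1]
    have hl : ((p ++ [a]) ++ [b]).length = (p ++ [a]).length + 1 := by simp
    rw [hl, nth_concat_self]

lemma count_take_zero {π : List Sym} {n : ℕ}
    (h : ∀ j, 1 ≤ j → j ≤ n → nth π j ≠ some Sym.e) : (π.take n).count Sym.e = 0 := by
  rw [List.count_eq_zero]
  intro hmem
  obtain ⟨i, hlt, hget⟩ := List.mem_iff_getElem.mp hmem
  have hlen : i < n ∧ i < π.length := by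
    rw [List.length_take] at hlt; omega
  apply h (i + 1) (by omega) (by omega)
  unfold nth
  rw [if_neg (by omega)]
  simp only [Nat.add_sub_cancel]
  rw [List.getElem?_eq_some_iff]
  exact ⟨hlen.2, by rw [← List.getElem_take (h := hlt)]; exact hget⟩

lemma count_drop_zero {π : List Sym} {a : ℕ}
    (h : ∀ j, a + 1 ≤ j → j ≤ π.length → nth π j ≠ some Sym.e) :
    (π.drop a).count Sym.e = 0 := by
  rw [List.count_eq_zero]
  intro hmem
  obtain ⟨i, hlt, hget⟩ := List.mem_iff_getElem.mp hmem
  have hlen : a + i < π.length := by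
    rw [List.length_drop] at hlt; omega
  apply h (a + i + 1) (by omega) (by omega)
  unfold nth
  rw [if_neg (by omega)]
  simp only [Nat.add_sub_cancel]
  rw [List.getElem?_eq_some_iff]
  exact ⟨hlen, by rw [← List.getElem_drop (h := hlt)]; exact hget⟩

/-- Let `M ≥ 3`, `π ∈ B_M`, and let `yz` (with `0 < y < z`) be a side
boundary edge of `L_π` with respect to `B_M`. Then `π` contains at most one copy of `e`;
`y < z - 1`; `L_π` has an `(M-1)`-fan at `y` while `L_{π'}` has an `M`-fan at `y`; and
`z = y + M` if `π(y-2) ≠ e`, whereas `z = y + M - 1` if `π(y-2) = e`. -/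
theorem side_boundary_structure (M : ℕ) (hM : 3 ≤ M) (π : List Sym)
    (hπ : memB M π) (y z : ℕ) (h : IsSideBoundaryEdge M π y z) :
    π.count Sym.e ≤ 1 ∧ y + 1 < z ∧ hasFanAt π (M - 1) y ∧
      hasFanAt (boundaryWord π y z) M y ∧
      (nth π (y - 2) ≠ some Sym.e → z = y + M) ∧
      (nth π (y - 2) = some Sym.e → z = y + M - 1) := by
  obtain ⟨hbd, hnotouter⟩ := h
  obtain ⟨hy0, hyz, hadj, hπy, hnotB⟩ := hbd
  obtain ⟨hPi, hπne, hnofan, hclause⟩ := hπ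
  have hedge : s(y, z) ∈ edgesOf π := ((adj_iff π y z).mp hadj).1
  have hzb : z ≤ π.length + 1 := (mem_edgesOf_bound hedge).2
  have hz2 : 2 ≤ z := by omega
  set σ : Sym := if y < z - 1 then Sym.zero else Sym.one with hσdef
  set π' := boundaryWord π y z with hπ'def
  have hπ'eq : π' = π.take (z - 1) ++ [σ] := rfl
  have hσne : σ ≠ Sym.e := by rw [hσdef]; split_ifs <;> simp
  have hσzero : σ = Sym.zero → y + 1 < z := by
    rw [hσdef]; split_ifs with hh
    · intro _; omega
    · intro hcon; exact absurd hcon (by simp)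
  have hτlen : (π.take (z - 1)).length = z - 1 := by rw [List.length_take]; omega
  have hE' : edgesOf π' = insert s(y, z + 1) (insert s(z, z + 1) (edgesOf (π.take (z - 1)))) :=
    edges_boundaryWord hedge hy0 hyz
  have hlen' : π'.length = z := by rw [hπ'eq, List.length_append, hτlen]; simp; omega
  have hnth' : ∀ j, j ≤ z - 1 → nth π' j = nth π j := by
    intro j hj
    rw [hπ'eq, nth_concat_lt (by omega), nth_take (by omega)]
  have hn'z : nth π' z = some σ := by
    have h1 := nth_concat_self (π.take (z - 1)) σ
    rw [hτlen] at h1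
    rw [hπ'eq]
    have hzz : z - 1 + 1 = z := by omega
    rwa [hzz] at h1
  have hdown : ∀ u v, s(u, v) ∈ edgesOf π' → u < z → v ≤ z →
      s(u, v) ∈ edgesOf (π.take (z - 1)) := by
    intro u v hm hu hv
    rw [hE', Set.mem_insert_iff, Set.mem_insert_iff] at hm
    rcases hm with hm | hm | hm
    · rw [Sym2.eq_iff] at hm; omega
    · rw [Sym2.eq_iff] at hm; omega
    · exact hm
  have hcnt2 : π.count Sym.e ≤ 2 := hPi.2.2.1
  have hcount' : π'.count Sym.e ≤ π.count Sym.e := by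
    rw [hπ'eq, List.count_append]
    have h1 : (π.take (z - 1)).count Sym.e ≤ π.count Sym.e :=
      (List.take_sublist _ _).count_le _
    have h2 : List.count Sym.e [σ] = 0 := by
      rw [List.count_eq_zero]
      simp only [List.mem_singleton]
      exact fun hh => hσne hh.symm
    omega
  -- π' ∈ Π
  have hPi' : memPi π' := by
    refine ⟨?_, ?_, hcount'.trans hcnt2, ?_, ?_, ?_⟩
    · rw [hnth' 1 (by omega)]; exact hPi.1
    · rcases Nat.lt_or_ge 2 z with hlt | hge
      · rw [hnth' 2 (by omega)]; exact hPi.2.1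
      · have hz2' : z = 2 := by omega
        have : nth π' 2 = some σ := by rw [← hz2']; exact hn'z
        rw [this]
        have hσ1 : σ = Sym.one := by
          rw [hσdef, if_neg (by omega)]
        rw [hσ1]; simp
    · intro hinf
      rw [hπ'eq] at hinf
      rcases infix_concat hinf with hinf | hsuf
      · exact hPi.2.2.2.1 (hinf.trans ((List.take_prefix _ _).isInfix))
      · obtain ⟨hσ0, hnthe⟩ := suffix_pair hsuf
        rw [hτlen, nth_take (le_refl _)] at hnthe
        have := edge_inv_ne hedge hy0 (hσzero hσ0.symm)
        exact this.1 hnthe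
    · intro hinf
      rw [hπ'eq] at hinf
      rcases infix_concat hinf with hinf | hsuf
      · exact hPi.2.2.2.2.1 (hinf.trans ((List.take_prefix _ _).isInfix))
      · obtain ⟨hσ0, hnthe, hnth1⟩ := suffix_triple hsuf
        rw [hτlen, nth_take (le_refl _)] at hnth1
        rw [hτlen, nth_take (by omega)] at hnthe
        rcases edge_inv hedge hy0 (hσzero hσ0.symm) with ⟨ha, hb⟩ | ⟨ha, hb⟩
        · apply hπy
          have : y = z - 1 - 1 := by omega
          rw [this]
          exact hnthe
        · rw [ha] at hnth1; simp at hnth1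
    · intro hinf
      rw [hπ'eq] at hinf
      rcases infix_concat hinf with hinf | hsuf
      · exact hPi.2.2.2.2.2 (hinf.trans ((List.take_prefix _ _).isInfix))
      · exact hσne (suffix_triple hsuf).1.symm
  -- π' has an M-fan
  have hfan' : hasFan π' M := by
    by_contra hnf
    apply hnotB
    have hne_out : ∀ _ : z = π.length + 1,
        ¬ ((π.count Sym.e = 0 ∧ π.length = 3 * M - 1) ∨
           (π.count Sym.e = 1 ∧ π.length = 2 * M) ∨
           (π.count Sym.e = 2 ∧ π.length = M + 1)) := fun h1 h2 =>
      hnotouter ⟨⟨hy0, hyz, hadj, hπy, hnotB⟩, h1, h2⟩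
    refine ⟨hPi', by rw [hπ'eq]; simp, hnf, ?_⟩
    have hc'cases : π'.count Sym.e = 0 ∨ π'.count Sym.e = 1 ∨ π'.count Sym.e = 2 := by
      have := hcount'.trans hcnt2; omega
    rcases hclause with ⟨hc, hl⟩ | ⟨hc, hl, hn⟩ | ⟨hc, hl, hn⟩
    · -- π has no e
      have hc' : π'.count Sym.e = 0 := by have := hcount'; omega
      refine Or.inl ⟨hc', ?_⟩
      rw [hlen']
      by_contra hh
      exact hne_out (by omega) (Or.inl ⟨hc, by omega⟩)
    · -- π has one e
      rcases hc'cases with hc' | hc' | hc'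
      · exact Or.inl ⟨hc', by rw [hlen']; omega⟩
      · refine Or.inr (Or.inl ⟨hc', ?_, ?_⟩)
        · rw [hlen']
          by_contra hh
          exact hne_out (by omega) (Or.inr (Or.inl ⟨hc, by omega⟩))
        · have hzle : z ≤ 2 * M := by
            by_contra hh
            exact hne_out (by omega) (Or.inr (Or.inl ⟨hc, by omega⟩))
          rcases eq_or_lt_of_le hzle with heq | hlt
          · rw [← heq, hn'z]
            exact fun hh => hσne (Option.some_injective _ hh)
          · rw [nth_none_of_gt (by rw [hlen']; omega)]; simp
      · omega
    · -- π has two e's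
      rcases hc'cases with hc' | hc' | hc'
      · exact Or.inl ⟨hc', by rw [hlen']; omega⟩
      · refine Or.inr (Or.inl ⟨hc', by rw [hlen']; omega, ?_⟩)
        rw [nth_none_of_gt (by rw [hlen']; omega)]
        simp
      · refine Or.inr (Or.inr ⟨hc', ?_, ?_⟩)
        · rw [hlen']
          by_contra hh
          exact hne_out (by omega) (Or.inr (Or.inr ⟨hc, by omega⟩))
        · have hzle : z ≤ M + 1 := by
            by_contra hh
            exact hne_out (by omega) (Or.inr (Or.inr ⟨hc, by omega⟩))
          rcases eq_or_lt_of_le hzle with heq | hlt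
          · rw [← heq, hn'z]
            exact fun hh => hσne (Option.some_injective _ hh)
          · rw [nth_none_of_gt (by rw [hlen']; omega)]
            simp
  obtain ⟨a, hfa⟩ := hfan'
  have haz : a + M ≤ z + 1 := by
    have hmem : s(a, a + M) ∈ edgesOf π' := by
      obtain ⟨ha0, hc⟩ := hfa
      rcases hc with ⟨_, hb⟩ | ⟨_, _, hb⟩
      · exact ((adj_iff _ _ _).mp (hb (a + M) (Finset.mem_Icc.mpr (by omega)))).1
      · exact ((adj_iff _ _ _).mp (hb (a + M) (Finset.mem_Icc.mpr (by omega)))).1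
    have := (mem_edgesOf_bound hmem).2
    rw [hlen'] at this; omega
  have hay : a = y := by
    by_contra hne
    apply hnofan
    refine ⟨a, hasFanAt_take (n := z - 1) ?_⟩
    obtain ⟨ha0, hc⟩ := hfa
    have hmv : ∀ b, (ladder π').Adj a b → (ladder (π.take (z - 1))).Adj a b := by
      intro b hb
      rw [adj_iff] at hb ⊢
      obtain ⟨hm, hab⟩ := hb
      refine ⟨?_, hab⟩
      rw [hE', Set.mem_insert_iff, Set.mem_insert_iff] at hm
      rcases hm with hm | hm | hm
      · rw [Sym2.eq_iff] at hm; omega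
      · rw [Sym2.eq_iff] at hm; omega
      · exact hm
    have hnt : nth (π.take (z - 1)) (a - 2) = nth π' (a - 2) := by
      rw [nth_take (by omega), ← hnth' _ (by omega)]
    rcases hc with ⟨hnea, hb⟩ | ⟨heqa, hm1, hb⟩
    · exact ⟨ha0, Or.inl ⟨by rw [hnt]; exact hnea, fun b hbm => hmv b (hb b hbm)⟩⟩
    · exact ⟨ha0, Or.inr ⟨by rw [hnt]; exact heqa, hmv _ hm1,
        fun b hbm => hmv b (hb b hbm)⟩⟩
  subst hay
  -- transfer helpers at y
  have hAdjτ : ∀ b, b ≤ z → (ladder π').Adj a b → (ladder (π.take (z - 1))).Adj a b := by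
    intro b hbz hb
    rw [adj_iff] at hb ⊢
    exact ⟨hdown a b hb.1 (by omega) hbz, hb.2⟩
  have hAdjπ : ∀ b, b ≤ z → (ladder π').Adj a b → (ladder π).Adj a b := by
    intro b hbz hb
    have := hAdjτ b hbz hb
    rw [adj_iff] at this ⊢
    exact ⟨edgesOf_take_subset π (z - 1) this.1, this.2⟩
  obtain ⟨_, hc⟩ := hfa
  rcases hc with ⟨hneA, hbA⟩ | ⟨heqB, hmB, hbB⟩
  · -- case A : π'(y-2) ≠ e
    have hzge : a + M ≤ z := by
      have hmem : s(a, a + M + 1) ∈ edgesOf π' :=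
        ((adj_iff _ _ _).mp (hbA (a + M + 1) (Finset.mem_Icc.mpr (by omega)))).1
      have := (mem_edgesOf_bound hmem).2
      rw [hlen'] at this; omega
    have hzle : z ≤ a + M := by
      by_contra hh
      apply hnofan
      refine ⟨a, hasFanAt_take (n := z - 1) ⟨hy0, Or.inl ⟨?_, ?_⟩⟩⟩
      · rw [nth_take (by omega), ← hnth' _ (by omega)]; exact hneA
      · intro b hbm
        rw [Finset.mem_Icc] at hbm
        exact hAdjτ b (by omega) (hbA b (Finset.mem_Icc.mpr (by omega)))
    have hzeq : z = a + M := by omega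
    have hnthy2 : nth π (a - 2) ≠ some Sym.e := by
      rw [← hnth' _ (by omega)]; exact hneA
    have hrange : ∀ j, a ≤ j → j ≤ z - 1 → nth π j ≠ some Sym.e := by
      intro j hj1 hj2
      rcases eq_or_lt_of_le hj1 with rfl | hlt
      · exact hπy
      · have hmemj : s(a, j + 1) ∈ edgesOf π :=
          ((adj_iff _ _ _).mp (hAdjπ (j + 1) (by omega)
            (hbA (j + 1) (Finset.mem_Icc.mpr (by omega))))).1
        have hin := edge_inv_ne hmemj hy0 (by omega)
        have hj1' : j + 1 - 1 = j := by omega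
        rw [hj1'] at hin
        exact hin.1
    have hcnt : π.count Sym.e ≤ 1 := by
      by_contra hh
      have hc2 : π.count Sym.e = 2 := by omega
      have hlπ : π.length ≤ M + 1 := by
        rcases hclause with ⟨h1, _⟩ | ⟨h1, _, _⟩ | ⟨_, h1, _⟩ <;> omega
      have hy2 : a ≤ 2 := by omega
      rcases (show a = 1 ∨ a = 2 by omega) with rfl | rfl
      · have h1 : (π.take M).count Sym.e = 0 :=
          count_take_zero (fun j hj1 hj2 => hrange j (by omega) (by omega))
        have h2 : (π.drop M).count Sym.e ≤ π.length - M :=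
          List.count_le_length.trans (by rw [List.length_drop])
        have h3 : π.count Sym.e = (π.take M).count Sym.e + (π.drop M).count Sym.e := by
          rw [← List.count_append, List.take_append_drop]
        omega
      · have h1 : (π.drop 1).count Sym.e = 0 :=
          count_drop_zero (fun j hj1 hj2 => hrange j (by omega) (by omega))
        have h2 : (π.take 1).count Sym.e ≤ 1 :=
          List.count_le_length.trans (by rw [List.length_take]; omega)
        have h3 : π.count Sym.e = (π.take 1).count Sym.e + (π.drop 1).count Sym.e := by
          rw [← List.count_append, List.take_append_drop]
        omega
    refine ⟨hcnt, by omega, ?_, ⟨hy0, Or.inl ⟨hneA, hbA⟩⟩, fun _ => hzeq.trans rfl,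
      fun hh => absurd hh hnthy2⟩
    exact ⟨hy0, Or.inl ⟨hnthy2, fun b hbm => by
      rw [Finset.mem_Icc] at hbm
      exact hAdjπ b (by omega) (hbA b (Finset.mem_Icc.mpr (by omega)))⟩⟩
  · -- case B : π'(y-2) = e
    have hy3 : 3 ≤ a := by
      have := (nth_some heqB).1; omega
    have hnthy2 : nth π (a - 2) = some Sym.e := by
      rw [← hnth' _ (by omega)]; exact heqB
    have hzge : a + M ≤ z + 1 := haz
    have hzle : z ≤ a + M - 1 := by
      by_contra hh
      apply hnofan
      refine ⟨a, hasFanAt_take (n := z - 1) ⟨hy0, Or.inr ⟨?_, ?_, ?_⟩⟩⟩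
      · rw [nth_take (by omega), ← hnth' _ (by omega)]; exact heqB
      · exact hAdjτ (a - 1) (by omega) hmB
      · intro b hbm
        rw [Finset.mem_Icc] at hbm
        exact hAdjτ b (by omega) (hbB b (Finset.mem_Icc.mpr (by omega)))
    have hzeq : z = a + M - 1 := by omega
    have hcnt : π.count Sym.e ≤ 1 := by
      by_contra hh
      have hc2 : π.count Sym.e = 2 := by omega
      have hlπ : π.length ≤ M + 1 := by
        rcases hclause with ⟨h1, _⟩ | ⟨h1, _, _⟩ | ⟨_, h1, _⟩ <;> omega
      exact hnotouter ⟨⟨hy0, hyz, hadj, hπy, hnotB⟩, by omega,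
        Or.inr (Or.inr ⟨hc2, by omega⟩)⟩
    refine ⟨hcnt, by omega, ?_, ⟨hy0, Or.inr ⟨heqB, hmB, hbB⟩⟩,
      fun hh => absurd hnthy2 hh, fun _ => hzeq⟩
    refine ⟨hy0, Or.inr ⟨hnthy2, hAdjπ (a - 1) (by omega) hmB, fun b hbm => by
      rw [Finset.mem_Icc] at hbm
      exact hAdjπ b (by omega) (hbB b (Finset.mem_Icc.mpr (by omega)))⟩⟩

end TriangleRemoval
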